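/- arXiv:2006.00590 — 6 statements merged into one kernel-verified Lean document; each statement's English description precedes it below -/
import Mathlib

section
/- Let c, m > 0, let t > 0 and let j be a positive integer with j ≤ √(t/(2cm)). Then Σ_{i=0}^{j-1} C(j,i)·c^{j-i}·t^i/(i!·m^i) ≤ 2c·j·t^{j-1}/((j-1)!·m^{j-1}). -/
open Finset

private lemma aux_fact : ∀ (k i n : ℕ), i + k ≤ n → (i + k).factorial ≤ i.factorial * n ^ k := by
  intro k
  induction k with
  | zero => intro i n _; simp
  | succ k ih =>
    intro i n h
    have h1 : i + k ≤ n := by omega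
    calc (i + (k + 1)).factorial = (i + k + 1) * (i + k).factorial := by
          rw [show i + (k + 1) = i + k + 1 by omega, Nat.factorial_succ]
      _ ≤ n * (i.factorial * n ^ k) := Nat.mul_le_mul (by omega) (ih i n h1)
      _ = i.factorial * n ^ (k + 1) := by ring

private lemma aux_key (j i : ℕ) (hij : i < j) :
    j.choose i * (j - 1).factorial ≤ i.factorial * j ^ (2 * (j - 1 - i) + 1) := by
  set k := j - 1 - i with hk
  have h1 : j.choose i ≤ j ^ (k + 1) := by
    calc j.choose i = j.choose (j - i) := by rw [Nat.choose_symm (le_of_lt hij)]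
      _ ≤ j ^ (j - i) := Nat.choose_le_pow _ _
      _ = j ^ (k + 1) := by rw [show j - i = k + 1 by omega]
  have h2 : (j - 1).factorial ≤ i.factorial * j ^ k := by
    have := aux_fact k i j (by omega)
    rwa [show i + k = j - 1 by omega] at this
  calc j.choose i * (j - 1).factorial ≤ j ^ (k + 1) * (i.factorial * j ^ k) :=
        Nat.mul_le_mul h1 h2
    _ = i.factorial * j ^ (2 * k + 1) := by ring

private lemma aux_half_sum (n : ℕ) : ∑ k ∈ Finset.range n, (1 / 2 : ℝ) ^ k ≤ 2 := by
  have h : ∀ n : ℕ, ∑ k ∈ Finset.range n, (1 / 2 : ℝ) ^ k = 2 - 2 * (1 / 2 : ℝ) ^ n := by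
    intro n
    induction n with
    | zero => simp
    | succ n ih => rw [Finset.sum_range_succ, ih]; ring
  rw [h]
  have : (0 : ℝ) ≤ (1 / 2 : ℝ) ^ n := by positivity
  linarith

theorem stmt_5 (c m t : ℝ) (hc : 0 < c) (hm : 0 < m) (ht : 0 < t)
    (j : ℕ) (hj : 1 ≤ j) (hjt : (j : ℝ) ≤ Real.sqrt (t / (2 * c * m))) :
    ∑ i ∈ Finset.range j, (j.choose i : ℝ) * c ^ (j - i) * t ^ i / ((i.factorial : ℝ) * m ^ i) ≤
      2 * c * (j : ℝ) * t ^ (j - 1) / (((j - 1).factorial : ℝ) * m ^ (j - 1)) := by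
  have hj0 : (0 : ℝ) < (j : ℝ) := by exact_mod_cast hj
  have hsq : (j : ℝ) ^ 2 ≤ t / (2 * c * m) := by
    rw [← Real.le_sqrt (by positivity) (by positivity)]
    exact hjt
  set r : ℝ := c * m * (j : ℝ) ^ 2 / t with hr
  have hr0 : 0 ≤ r := by positivity
  have hr2 : r ≤ 1 / 2 := by
    have h2cm : (0 : ℝ) < 2 * c * m := by positivity
    have h3 : (j : ℝ) ^ 2 * (2 * c * m) ≤ t := (le_div_iff₀ h2cm).mp hsq
    rw [hr, div_le_iff₀ ht]
    nlinarith [h3]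
  set A : ℝ := c * (j : ℝ) * t ^ (j - 1) / (((j - 1).factorial : ℝ) * m ^ (j - 1)) with hA
  have hA0 : 0 ≤ A := by positivity
  have step : ∀ i ∈ Finset.range j,
      (j.choose i : ℝ) * c ^ (j - i) * t ^ i / ((i.factorial : ℝ) * m ^ i) ≤
        A * (1 / 2 : ℝ) ^ (j - 1 - i) := by
    intro i hi
    rw [Finset.mem_range] at hi
    set k := j - 1 - i with hk
    have hik : j - 1 = i + k := by omega
    have hji : j - i = k + 1 := by omega
    have hnat : (j.choose i : ℝ) * ((j - 1).factorial : ℝ) ≤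
        (i.factorial : ℝ) * (j : ℝ) ^ (2 * k + 1) := by
      exact_mod_cast aux_key j i hi
    have hfac1 : (0 : ℝ) < (i.factorial : ℝ) * m ^ i := by positivity
    have hfac2 : (0 : ℝ) < ((j - 1).factorial : ℝ) * m ^ i := by positivity
    have hmid : (j.choose i : ℝ) * c ^ (j - i) * t ^ i / ((i.factorial : ℝ) * m ^ i) ≤
        c ^ (k + 1) * (j : ℝ) ^ (2 * k + 1) * t ^ i / (((j - 1).factorial : ℝ) * m ^ i) := by
      rw [div_le_div_iff₀ hfac1 hfac2, hji]
      calc (j.choose i : ℝ) * c ^ (k + 1) * t ^ i * (((j - 1).factorial : ℝ) * m ^ i)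
          = ((j.choose i : ℝ) * ((j - 1).factorial : ℝ)) * (c ^ (k + 1) * t ^ i * m ^ i) := by
            ring
        _ ≤ ((i.factorial : ℝ) * (j : ℝ) ^ (2 * k + 1)) * (c ^ (k + 1) * t ^ i * m ^ i) :=
            mul_le_mul_of_nonneg_right hnat (by positivity)
        _ = c ^ (k + 1) * (j : ℝ) ^ (2 * k + 1) * t ^ i * ((i.factorial : ℝ) * m ^ i) := by
            ring
    have hAr : A * r ^ k =
        c ^ (k + 1) * (j : ℝ) ^ (2 * k + 1) * t ^ i / (((j - 1).factorial : ℝ) * m ^ i) := by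
      rw [hA, hr, hik]
      rw [div_pow]
      field_simp
      ring
    calc (j.choose i : ℝ) * c ^ (j - i) * t ^ i / ((i.factorial : ℝ) * m ^ i)
        ≤ c ^ (k + 1) * (j : ℝ) ^ (2 * k + 1) * t ^ i / (((j - 1).factorial : ℝ) * m ^ i) :=
          hmid
      _ = A * r ^ k := hAr.symm
      _ ≤ A * (1 / 2 : ℝ) ^ k :=
          mul_le_mul_of_nonneg_left (pow_le_pow_left₀ hr0 hr2 k) hA0
  calc ∑ i ∈ Finset.range j, (j.choose i : ℝ) * c ^ (j - i) * t ^ i / ((i.factorial : ℝ) * m ^ i)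
      ≤ ∑ i ∈ Finset.range j, A * (1 / 2 : ℝ) ^ (j - 1 - i) := Finset.sum_le_sum step
    _ = A * ∑ i ∈ Finset.range j, (1 / 2 : ℝ) ^ (j - 1 - i) := by rw [Finset.mul_sum]
    _ = A * ∑ i ∈ Finset.range j, (1 / 2 : ℝ) ^ i := by
        rw [Finset.sum_range_reflect (fun i => (1 / 2 : ℝ) ^ i) j]
    _ ≤ A * 2 := mul_le_mul_of_nonneg_left (aux_half_sum j) hA0
    _ = 2 * c * (j : ℝ) * t ^ (j - 1) / (((j - 1).factorial : ℝ) * m ^ (j - 1)) := by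
        rw [hA]; ring
end

section
/- Let G : [0,∞) → [0,1] be a distribution function of a nonnegative random variable η with finite mean Eη, and m > 0. Define V̄(t) = (1/m)∫_0^t G(y) dy. Then (t - Eη)/m ≤ V̄(t) ≤ t/m for all t ≥ 0, and consequently the j-fold Stieltjes convolution V̄_j satisfies 0 ≤ t^j/(j!·m^j) - V̄_j(t) ≤ Σ_{i=0}^{j-1} C(j,i)·(Eη/m)^{j-i}·t^i/(i!·m^i) for all j ≥ 1 and t ≥ 0; in particular V̄_j(t) ≤ t^j/(j!·m^j). -/
open MeasureTheory Finset
open scoped ProbabilityTheory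

lemma aux_ii (g h : ℝ → ℝ) (hg : Monotone g) (hh : Measurable h) (C : ℝ)
    (hhC : ∀ y, ‖h y‖ ≤ C) (c a b : ℝ) :
    IntervalIntegrable (fun y => g (c - y) * h y) volume a b := by
  rw [intervalIntegrable_iff]
  have h1 : IntegrableOn (fun y => g (c - y)) (Set.uIoc a b) volume := by
    rw [← intervalIntegrable_iff]
    exact (hg.comp_antitone fun u v huv => sub_le_sub_left huv c).intervalIntegrable
  exact (h1.bdd_mul hh.aestronglyMeasurable (Filter.Eventually.of_forall hhC)).congr
    (Filter.Eventually.of_forall fun y => mul_comm _ _)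

lemma aux_sum (j : ℕ) (hj : 1 ≤ j) (w : ℕ → ℝ) (hw : ∀ i, 0 ≤ w i) :
    (∑ i ∈ Finset.range j, (j.choose i : ℝ) * w (i + 1)) + w j ≤
      ∑ i ∈ Finset.range (j + 1), ((j + 1).choose i : ℝ) * w i := by
  have hsplit : ∑ i ∈ Finset.range (j + 1), ((j + 1).choose i : ℝ) * w i
      = (∑ i ∈ Finset.range j, ((j.choose i : ℝ) * w (i + 1) + (j.choose (i + 1) : ℝ) * w (i + 1)))
        + ((j + 1).choose 0 : ℝ) * w 0 := by
    rw [Finset.sum_range_succ']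
    congr 1
    refine Finset.sum_congr rfl fun i _ => ?_
    rw [Nat.choose_succ_succ]
    push_cast
    ring
  rw [hsplit, Finset.sum_add_distrib]
  have hmem : j - 1 ∈ Finset.range j := Finset.mem_range.mpr (by omega)
  have h2 := Finset.single_le_sum (f := fun i => (j.choose (i + 1) : ℝ) * w (i + 1))
    (fun i _ => mul_nonneg (Nat.cast_nonneg _) (hw _)) hmem
  have hj1 : j - 1 + 1 = j := by omega
  simp only [hj1, Nat.choose_self] at h2
  have h3 : (0:ℝ) ≤ ((j + 1).choose 0 : ℝ) * w 0 := mul_nonneg (Nat.cast_nonneg _) (hw _)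
  simp only [Nat.cast_one, one_mul] at h2
  linarith

lemma aux_tail {Ω : Type*} [MeasureSpace Ω] [IsProbabilityMeasure (ℙ : Measure Ω)]
    (η : Ω → ℝ) (hηmeas : Measurable η) (hηnn : ∀ ω, 0 ≤ η ω) (hηint : Integrable η)
    (t : ℝ) (ht : 0 ≤ t) :
    ∫ y in (0:ℝ)..t, (ℙ {ω | y < η ω}).toReal ≤ ∫ ω, η ω := by
  have hTanti : Antitone (fun y : ℝ => (ℙ {ω | y < η ω}).toReal) := fun a b hab =>
    ENNReal.toReal_mono (measure_ne_top _ _)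
      (measure_mono fun ω hω => lt_of_le_of_lt hab hω)
  have hnn : ∀ y : ℝ, 0 ≤ (ℙ {ω | y < η ω}).toReal := fun y => ENNReal.toReal_nonneg
  have hEeq : ∫ ω, η ω = ∫ y in Set.Ioi (0:ℝ), (ℙ {ω | y < η ω}).toReal :=
    hηint.integral_eq_integral_meas_lt (Filter.Eventually.of_forall hηnn)
  have hlint : ∫⁻ y in Set.Ioi (0:ℝ), ENNReal.ofReal ((ℙ {ω | y < η ω}).toReal) < ⊤ := by
    have heq : ∀ y : ℝ, ENNReal.ofReal ((ℙ {ω | y < η ω}).toReal) = ℙ {ω | y < η ω} :=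
      fun y => ENNReal.ofReal_toReal (measure_ne_top _ _)
    simp_rw [heq]
    rw [← lintegral_eq_lintegral_meas_lt ℙ (Filter.Eventually.of_forall hηnn) hηmeas.aemeasurable]
    exact hηint.lintegral_lt_top
  have hTint : IntegrableOn (fun y : ℝ => (ℙ {ω | y < η ω}).toReal) (Set.Ioi 0) volume := by
    refine ⟨hTanti.measurable.aestronglyMeasurable, ?_⟩
    rw [hasFiniteIntegral_iff_ofReal (Filter.Eventually.of_forall hnn)]
    exact hlint
  rw [intervalIntegral.integral_of_le ht, hEeq]
  exact setIntegral_mono_set hTint (Filter.Eventually.of_forall hnn)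
    (Filter.Eventually.of_forall fun y hy => Set.Ioc_subset_Ioi_self hy)

theorem stmt_7 {Ω : Type*} [MeasureSpace Ω] [IsProbabilityMeasure (ℙ : Measure Ω)]
    (η : Ω → ℝ) (hηmeas : Measurable η) (hηnn : ∀ ω, 0 ≤ η ω) (hηint : Integrable η)
    (m : ℝ) (hm : 0 < m)
    (G : ℝ → ℝ) (hG : ∀ t : ℝ, G t = (ℙ {ω | η ω ≤ t}).toReal)
    (Vbar : ℝ → ℝ) (hVbar : ∀ t : ℝ, Vbar t = (1 / m) * ∫ y in (0:ℝ)..t, G y)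
    (Vb : ℕ → ℝ → ℝ)
    (hVb1 : ∀ t : ℝ, Vb 1 t = Vbar t)
    (hVbrec : ∀ j : ℕ, 2 ≤ j → ∀ t : ℝ, 0 ≤ t →
      Vb j t = ∫ y in (0:ℝ)..t, Vb (j - 1) (t - y) * (G y / m)) :
    (∀ t : ℝ, 0 ≤ t → (t - ∫ ω, η ω) / m ≤ Vbar t ∧ Vbar t ≤ t / m) ∧
    (∀ j : ℕ, 1 ≤ j → ∀ t : ℝ, 0 ≤ t →
      0 ≤ t ^ j / ((j.factorial : ℝ) * m ^ j) - Vb j t ∧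
      t ^ j / ((j.factorial : ℝ) * m ^ j) - Vb j t ≤
        ∑ i ∈ Finset.range j,
          (j.choose i : ℝ) * ((∫ ω, η ω) / m) ^ (j - i) * t ^ i / ((i.factorial : ℝ) * m ^ i)) := by
  set E := ∫ ω, η ω with hEdef
  have hEnn : 0 ≤ E := integral_nonneg hηnn
  have hGnn : ∀ y : ℝ, 0 ≤ G y := fun y => by rw [hG]; positivity
  have hGle1 : ∀ y : ℝ, G y ≤ 1 := by
    intro y; rw [hG]
    calc (ℙ {ω | η ω ≤ y}).toReal ≤ (1 : ENNReal).toReal :=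
          ENNReal.toReal_mono (by simp) prob_le_one
    _ = 1 := by simp
  have hGmono : Monotone G := by
    intro a b hab
    rw [hG, hG]
    exact ENNReal.toReal_mono (measure_ne_top _ _)
      (measure_mono fun ω hω => le_trans hω hab)
  have hGmeas : Measurable G := hGmono.measurable
  have hGii : ∀ a b : ℝ, IntervalIntegrable G volume a b := fun a b =>
    hGmono.intervalIntegrable
  -- tail comparison
  have hTG : ∀ y : ℝ, (ℙ {ω | y < η ω}).toReal = 1 - G y := by
    intro y
    rw [hG]
    have hc : {ω : Ω | y < η ω} = {ω : Ω | η ω ≤ y}ᶜ := by ext ω; simp [not_le]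
    have hmeas : MeasurableSet {ω : Ω | η ω ≤ y} := hηmeas measurableSet_Iic
    rw [hc, prob_compl_eq_one_sub hmeas]
    rw [ENNReal.toReal_sub_of_le prob_le_one (by simp)]
    simp
  have hTail : ∀ t : ℝ, 0 ≤ t → (∫ y in (0:ℝ)..t, (1 - G y)) ≤ E := by
    intro t ht
    have := aux_tail η hηmeas hηnn hηint t ht
    rwa [intervalIntegral.integral_congr (g := fun y => 1 - G y)
      (fun y _ => hTG y)] at this
  have hGint_eq : ∀ t : ℝ, (∫ y in (0:ℝ)..t, G y) = t - ∫ y in (0:ℝ)..t, (1 - G y) := by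
    intro t
    have h2 : (∫ y in (0:ℝ)..t, (1 - G y)) = t - ∫ y in (0:ℝ)..t, G y := by
      rw [intervalIntegral.integral_sub intervalIntegrable_const (hGii 0 t)]
      simp
    rw [h2]; ring
  have part1 : ∀ t : ℝ, 0 ≤ t → (t - E) / m ≤ Vbar t ∧ Vbar t ≤ t / m := by
    intro t ht
    constructor
    · rw [hVbar, hGint_eq t]
      have h3 : t - E ≤ t - ∫ y in (0:ℝ)..t, (1 - G y) := by linarith [hTail t ht]
      calc (t - E) / m = (1/m) * (t - E) := by ring
        _ ≤ (1/m) * (t - ∫ y in (0:ℝ)..t, (1 - G y)) :=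
            mul_le_mul_of_nonneg_left h3 (by positivity)
    · rw [hVbar]
      have h4 : (∫ y in (0:ℝ)..t, G y) ≤ ∫ y in (0:ℝ)..t, (1:ℝ) :=
        intervalIntegral.integral_mono_on ht (hGii 0 t) intervalIntegrable_const
          fun x _ => hGle1 x
      simp only [intervalIntegral.integral_const, smul_eq_mul, mul_one, sub_zero] at h4
      calc (1/m) * ∫ y in (0:ℝ)..t, G y ≤ (1/m) * t :=
            mul_le_mul_of_nonneg_left h4 (by positivity)
        _ = t / m := by ring
  have hVbarMono : MonotoneOn Vbar (Set.Ici 0) := by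
    intro a ha b hb hab
    simp only [Set.mem_Ici] at ha hb
    rw [hVbar, hVbar]
    have h5 : (∫ y in (0:ℝ)..a, G y) ≤ ∫ y in (0:ℝ)..b, G y :=
      intervalIntegral.integral_mono_interval le_rfl ha hab
        (Filter.Eventually.of_forall fun y => hGnn y) (hGii 0 b)
    exact mul_le_mul_of_nonneg_left h5 (by positivity)
  set S : ℕ → ℝ → ℝ := fun j t => ∑ i ∈ Finset.range j,
      (j.choose i : ℝ) * (E / m) ^ (j - i) * t ^ i / ((i.factorial : ℝ) * m ^ i) with hSdef
  have hEm : 0 ≤ E / m := div_nonneg hEnn hm.le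
  have hSnn : ∀ j : ℕ, ∀ t : ℝ, 0 ≤ t → 0 ≤ S j t := by
    intro j t ht
    refine Finset.sum_nonneg fun i _ => ?_
    exact div_nonneg (mul_nonneg (mul_nonneg (Nat.cast_nonneg _) (pow_nonneg hEm _))
      (pow_nonneg ht _)) (by positivity)
  have key : ∀ j : ℕ, 1 ≤ j →
      (∀ t : ℝ, 0 ≤ t →
        0 ≤ t ^ j / ((j.factorial : ℝ) * m ^ j) - Vb j t ∧
        t ^ j / ((j.factorial : ℝ) * m ^ j) - Vb j t ≤ S j t)
      ∧ MonotoneOn (Vb j) (Set.Ici 0) ∧ Vb j 0 = 0 := by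
    intro j hj
    induction j, hj using Nat.le_induction with
    | base =>
      refine ⟨?_, ?_, ?_⟩
      · intro t ht
        obtain ⟨h1, h2⟩ := part1 t ht
        rw [hVb1]
        have e1 : t ^ 1 / ((Nat.factorial 1 : ℝ) * m ^ 1) = t / m := by
          norm_num [Nat.factorial]
        rw [e1]
        have e2 : S 1 t = E / m := by
          simp [hSdef, Nat.factorial]
        rw [e2]
        have e3 : (t - E) / m = t / m - E / m := by ring
        constructor <;> linarith
      · intro a ha b hb hab
        rw [hVb1, hVb1]
        exact hVbarMono ha hb hab
      · rw [hVb1, hVbar]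
        simp
    | succ j hj IH =>
      obtain ⟨IHb, IHmono, IH0⟩ := IH
      set g : ℝ → ℝ := fun u => Vb j (max u 0) with hgdef
      have hgmono : Monotone g := fun u v huv =>
        IHmono (Set.mem_Ici.mpr (le_max_right u 0)) (Set.mem_Ici.mpr (le_max_right v 0))
          (max_le_max huv le_rfl)
      have hgeq : ∀ u : ℝ, 0 ≤ u → g u = Vb j u := fun u hu => by
        rw [hgdef]; simp [max_eq_left hu]
      have hgnn : ∀ u : ℝ, 0 ≤ g u := by
        intro u
        rw [← IH0]
        exact IHmono Set.self_mem_Ici (Set.mem_Ici.mpr (le_max_right u 0)) (le_max_right u 0)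
      have hii : ∀ c a b : ℝ, IntervalIntegrable (fun y => g (c - y) * (G y / m)) volume a b := by
        intro c a b
        refine aux_ii g (fun y => G y / m) hgmono (hGmeas.div_const m) (1/m) ?_ c a b
        intro y
        rw [Real.norm_eq_abs, abs_div, abs_of_nonneg (hGnn y), abs_of_pos hm]
        exact (div_le_div_iff_of_pos_right hm).mpr (hGle1 y)
      have hrec : ∀ t : ℝ, 0 ≤ t →
          Vb (j+1) t = ∫ y in (0:ℝ)..t, g (t - y) * (G y / m) := by
        intro t ht
        rw [hVbrec (j+1) (by omega) t ht]
        simp only [Nat.add_sub_cancel]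
        apply intervalIntegral.integral_congr
        intro y hy
        rw [Set.uIcc_of_le ht] at hy
        show Vb j (t - y) * (G y / m) = g (t - y) * (G y / m)
        rw [hgeq (t - y) (by linarith [hy.2])]
      have hKpos : (0:ℝ) < (j.factorial : ℝ) * m ^ j := by positivity
      -- the upper bound: Vb (j+1) t ≤ t^(j+1)/((j+1)! m^(j+1))
      have hF_ii : ∀ t : ℝ, IntervalIntegrable
          (fun y => (t - y) ^ j / ((j.factorial : ℝ) * m ^ j) * (1/m)) volume 0 t := by
        intro t
        exact (((continuous_const.sub continuous_id).pow j).div_const _ |>.mul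
          continuous_const).intervalIntegrable 0 t
      have hFcalc : ∀ t : ℝ, (∫ y in (0:ℝ)..t, (t - y) ^ j / ((j.factorial : ℝ) * m ^ j) * (1/m))
          = t ^ (j+1) / (((j+1).factorial : ℝ) * m ^ (j+1)) := by
        intro t
        have e1 : (∫ y in (0:ℝ)..t, (t - y) ^ j / ((j.factorial : ℝ) * m ^ j) * (1/m))
            = (∫ y in (0:ℝ)..t, (t - y) ^ j) * (1 / ((j.factorial : ℝ) * m ^ j * m)) := by
          rw [← intervalIntegral.integral_mul_const]
          apply intervalIntegral.integral_congr
          intro y _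
          field_simp
        rw [e1]
        have e2 : (∫ y in (0:ℝ)..t, (t - y) ^ j) = ∫ x in (0:ℝ)..t, x ^ j := by
          have := intervalIntegral.integral_comp_sub_left (a := (0:ℝ)) (b := t)
            (fun x : ℝ => x ^ j) t
          simpa using this
        rw [e2, integral_pow, zero_pow (Nat.succ_ne_zero j), Nat.factorial_succ, pow_succ]
        push_cast
        field_simp
        ring_nf
        try exact Or.inl trivial
      have hptUB : ∀ t : ℝ, 0 ≤ t → ∀ y ∈ Set.Icc (0:ℝ) t,
          g (t - y) * (G y / m) ≤ (t - y) ^ j / ((j.factorial : ℝ) * m ^ j) * (1/m) := by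
        intro t ht y hy
        have hty : 0 ≤ t - y := by linarith [hy.2]
        have h1 : g (t - y) ≤ (t - y) ^ j / ((j.factorial : ℝ) * m ^ j) := by
          rw [hgeq _ hty]
          linarith [(IHb (t - y) hty).1]
        calc g (t - y) * (G y / m)
            ≤ (t - y) ^ j / ((j.factorial : ℝ) * m ^ j) * (G y / m) :=
              mul_le_mul_of_nonneg_right h1 (div_nonneg (hGnn y) hm.le)
          _ ≤ (t - y) ^ j / ((j.factorial : ℝ) * m ^ j) * (1/m) :=
              mul_le_mul_of_nonneg_left ((div_le_div_iff_of_pos_right hm).mpr (hGle1 y)) (by positivity)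
      have hUB : ∀ t : ℝ, 0 ≤ t →
          Vb (j+1) t ≤ t ^ (j+1) / (((j+1).factorial : ℝ) * m ^ (j+1)) := by
        intro t ht
        rw [hrec t ht, ← hFcalc t]
        exact intervalIntegral.integral_mono_on ht (hii t 0 t) (hF_ii t) (hptUB t ht)
      refine ⟨?_, ?_, ?_⟩
      · intro t ht
        constructor
        · linarith [hUB t ht]
        · -- the sum bound
          have hScont : Continuous fun y : ℝ => S j (t - y) := by
            rw [hSdef]
            apply continuous_finset_sum
            intro i _
            fun_prop
          have hB1_ii : IntervalIntegrable (fun y => S j (t - y) * (1/m)) volume 0 t :=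
            (hScont.mul continuous_const).intervalIntegrable 0 t
          have hB2_ii : IntervalIntegrable
              (fun y => t ^ j / ((j.factorial : ℝ) * m ^ j) * ((1 - G y) * (1/m))) volume 0 t :=
            ((intervalIntegrable_const.sub (hGii 0 t)).mul_const (1/m)).const_mul _
          have hB_ii : IntervalIntegrable
              (fun y => S j (t - y) * (1/m)
                + t ^ j / ((j.factorial : ℝ) * m ^ j) * ((1 - G y) * (1/m))) volume 0 t :=
            hB1_ii.add hB2_ii
          have hdiff : t ^ (j+1) / (((j+1).factorial : ℝ) * m ^ (j+1)) - Vb (j+1) t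
              = ∫ y in (0:ℝ)..t,
                  ((t - y) ^ j / ((j.factorial : ℝ) * m ^ j) * (1/m) - g (t - y) * (G y / m)) := by
            rw [hrec t ht, ← hFcalc t, intervalIntegral.integral_sub (hF_ii t) (hii t 0 t)]
          have hpt : ∀ y ∈ Set.Icc (0:ℝ) t,
              (t - y) ^ j / ((j.factorial : ℝ) * m ^ j) * (1/m) - g (t - y) * (G y / m)
                ≤ S j (t - y) * (1/m)
                  + t ^ j / ((j.factorial : ℝ) * m ^ j) * ((1 - G y) * (1/m)) := by
            intro y hy
            have hty : 0 ≤ t - y := by linarith [hy.2]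
            have hGy0 := hGnn y
            have hGy1 := hGle1 y
            have h2 : (t - y) ^ j / ((j.factorial : ℝ) * m ^ j) - g (t - y) ≤ S j (t - y) := by
              rw [hgeq _ hty]; exact (IHb _ hty).2
            have hA : ((t - y) ^ j / ((j.factorial : ℝ) * m ^ j) - g (t - y)) * (G y / m)
                ≤ S j (t - y) * (1/m) := by
              calc ((t - y) ^ j / ((j.factorial : ℝ) * m ^ j) - g (t - y)) * (G y / m)
                  ≤ S j (t - y) * (G y / m) :=
                    mul_le_mul_of_nonneg_right h2 (div_nonneg hGy0 hm.le)
                _ ≤ S j (t - y) * (1/m) :=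
                    mul_le_mul_of_nonneg_left ((div_le_div_iff_of_pos_right hm).mpr hGy1) (hSnn j _ hty)
            have hBt : (t - y) ^ j / ((j.factorial : ℝ) * m ^ j) * ((1 - G y) * (1/m))
                ≤ t ^ j / ((j.factorial : ℝ) * m ^ j) * ((1 - G y) * (1/m)) := by
              have hpow : (t - y) ^ j ≤ t ^ j := pow_le_pow_left₀ hty (by linarith [hy.1]) j
              exact mul_le_mul_of_nonneg_right ((div_le_div_iff_of_pos_right hKpos).mpr hpow)
                (mul_nonneg (by linarith) (by positivity))
            have hiden : (t - y) ^ j / ((j.factorial : ℝ) * m ^ j) * (1/m)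
                  - g (t - y) * (G y / m)
                = ((t - y) ^ j / ((j.factorial : ℝ) * m ^ j) - g (t - y)) * (G y / m)
                  + (t - y) ^ j / ((j.factorial : ℝ) * m ^ j) * ((1 - G y) * (1/m)) := by
              ring
            linarith [hA, hBt, hiden]
          have hIB : (∫ y in (0:ℝ)..t,
                ((t - y) ^ j / ((j.factorial : ℝ) * m ^ j) * (1/m) - g (t - y) * (G y / m)))
              ≤ ∫ y in (0:ℝ)..t,
                  (S j (t - y) * (1/m)
                    + t ^ j / ((j.factorial : ℝ) * m ^ j) * ((1 - G y) * (1/m))) :=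
            intervalIntegral.integral_mono_on ht ((hF_ii t).sub (hii t 0 t)) hB_ii hpt
          have hBint : (∫ y in (0:ℝ)..t,
                (S j (t - y) * (1/m)
                  + t ^ j / ((j.factorial : ℝ) * m ^ j) * ((1 - G y) * (1/m))))
              = (∫ y in (0:ℝ)..t, S j (t - y)) * (1/m)
                + t ^ j / ((j.factorial : ℝ) * m ^ j) * ((∫ y in (0:ℝ)..t, (1 - G y)) * (1/m)) := by
            rw [intervalIntegral.integral_add hB1_ii hB2_ii,
              intervalIntegral.integral_mul_const, intervalIntegral.integral_const_mul,
              intervalIntegral.integral_mul_const]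
          have hSint : (∫ y in (0:ℝ)..t, S j (t - y))
              = ∑ i ∈ Finset.range j,
                  (j.choose i : ℝ) * (E/m) ^ (j - i) * t ^ (i+1)
                    / (((i+1).factorial : ℝ) * m ^ i) := by
            have hterm : ∀ i ∈ Finset.range j, IntervalIntegrable
                (fun y => (j.choose i : ℝ) * (E/m) ^ (j - i) * (t - y) ^ i
                  / ((i.factorial : ℝ) * m ^ i)) volume 0 t :=
              fun i _ => (by fun_prop : Continuous fun y : ℝ =>
                (j.choose i : ℝ) * (E/m) ^ (j - i) * (t - y) ^ i
                  / ((i.factorial : ℝ) * m ^ i)).intervalIntegrable 0 t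
            simp only [hSdef]
            rw [intervalIntegral.integral_finset_sum hterm]
            refine Finset.sum_congr rfl fun i _ => ?_
            have e1 : (∫ y in (0:ℝ)..t,
                  (j.choose i : ℝ) * (E/m) ^ (j - i) * (t - y) ^ i
                    / ((i.factorial : ℝ) * m ^ i))
                = (∫ y in (0:ℝ)..t, (t - y) ^ i)
                  * ((j.choose i : ℝ) * (E/m) ^ (j - i) / ((i.factorial : ℝ) * m ^ i)) := by
              rw [← intervalIntegral.integral_mul_const]
              apply intervalIntegral.integral_congr
              intro y _
              show (j.choose i : ℝ) * (E/m) ^ (j - i) * (t - y) ^ i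
                  / ((i.factorial : ℝ) * m ^ i)
                = (t - y) ^ i * ((j.choose i : ℝ) * (E/m) ^ (j - i) / ((i.factorial : ℝ) * m ^ i))
              ring
            rw [e1]
            have e2 : (∫ y in (0:ℝ)..t, (t - y) ^ i) = ∫ x in (0:ℝ)..t, x ^ i := by
              have := intervalIntegral.integral_comp_sub_left (a := (0:ℝ)) (b := t)
                (fun x : ℝ => x ^ i) t
              simpa using this
            rw [e2, integral_pow, zero_pow (Nat.succ_ne_zero i), Nat.factorial_succ]
            push_cast
            field_simp
            ring_nf
            try exact Or.inl trivial
          set w : ℕ → ℝ := fun i =>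
            (E/m) ^ (j + 1 - i) * t ^ i / ((i.factorial : ℝ) * m ^ i) with hwdef
          have hwnn : ∀ i, 0 ≤ w i := fun i => by
            simp only [hwdef]
            exact div_nonneg (mul_nonneg (pow_nonneg hEm _) (pow_nonneg ht _)) (by positivity)
          have hc1 : (∑ i ∈ Finset.range j,
                (j.choose i : ℝ) * (E/m) ^ (j - i) * t ^ (i+1)
                  / (((i+1).factorial : ℝ) * m ^ i)) * (1/m)
              = ∑ i ∈ Finset.range j, (j.choose i : ℝ) * w (i+1) := by
            rw [Finset.sum_mul]
            refine Finset.sum_congr rfl fun i hi => ?_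
            simp only [hwdef]
            rw [show j + 1 - (i + 1) = j - i from by omega, pow_succ m i]
            ring
          have hc2 : t ^ j / ((j.factorial : ℝ) * m ^ j) * (E * (1/m)) = w j := by
            simp only [hwdef]
            rw [show j + 1 - j = 1 from by omega, pow_one]
            ring
          have hmono2 : t ^ j / ((j.factorial : ℝ) * m ^ j)
                * ((∫ y in (0:ℝ)..t, (1 - G y)) * (1/m))
              ≤ t ^ j / ((j.factorial : ℝ) * m ^ j) * (E * (1/m)) :=
            mul_le_mul_of_nonneg_left
              (mul_le_mul_of_nonneg_right (hTail t ht) (by positivity)) (by positivity)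
          have hfin := aux_sum j hj w hwnn
          have hSsucc : (∑ i ∈ Finset.range (j+1), ((j+1).choose i : ℝ) * w i) = S (j+1) t := by
            simp only [hSdef, hwdef]
            refine Finset.sum_congr rfl fun i _ => ?_
            ring
          rw [hSint] at hBint
          rw [hdiff]
          calc (∫ y in (0:ℝ)..t,
                ((t - y) ^ j / ((j.factorial : ℝ) * m ^ j) * (1/m) - g (t - y) * (G y / m)))
              ≤ (∑ i ∈ Finset.range j,
                  (j.choose i : ℝ) * (E/m) ^ (j - i) * t ^ (i+1)
                    / (((i+1).factorial : ℝ) * m ^ i)) * (1/m)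
                + t ^ j / ((j.factorial : ℝ) * m ^ j) * ((∫ y in (0:ℝ)..t, (1 - G y)) * (1/m)) := by
                rw [← hBint]; exact hIB
            _ ≤ (∑ i ∈ Finset.range j, (j.choose i : ℝ) * w (i+1)) + w j := by
                rw [← hc1, ← hc2]; linarith [hmono2]
            _ ≤ ∑ i ∈ Finset.range (j+1), ((j+1).choose i : ℝ) * w i := hfin
            _ = S (j+1) t := hSsucc
      · intro a ha b hb hab
        simp only [Set.mem_Ici] at ha hb
        rw [hrec a ha, hrec b hb]
        have h1 : (∫ y in (0:ℝ)..a, g (a - y) * (G y / m))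
            ≤ ∫ y in (0:ℝ)..a, g (b - y) * (G y / m) :=
          intervalIntegral.integral_mono_on ha (hii a 0 a) (hii b 0 a)
            (fun y hy => mul_le_mul_of_nonneg_right (hgmono (by linarith))
              (div_nonneg (hGnn y) hm.le))
        have h2 : (∫ y in (0:ℝ)..a, g (b - y) * (G y / m))
            ≤ ∫ y in (0:ℝ)..b, g (b - y) * (G y / m) :=
          intervalIntegral.integral_mono_interval le_rfl ha hab
            (Filter.Eventually.of_forall fun y => mul_nonneg (hgnn _)
              (div_nonneg (hGnn y) hm.le)) (hii b 0 b)
        linarith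
      · rw [hVbrec (j+1) (by omega) 0 le_rfl, intervalIntegral.integral_same]
  refine ⟨part1, ?_⟩
  intro j hj t ht
  have h := (key j hj).1 t ht
  rw [hSdef] at h
  exact ⟨h.1, h.2⟩
end

section
/- Let (j_n) be a sequence of positive reals with j_n → ∞ and j_n = o(log n) as n → ∞, and fix u > 0. Then Σ_{i=0}^{⌊j_n u⌋ - 1} (log n)^i / i! ~ (log n)^{⌊j_n u⌋ - 1} / (⌊j_n u⌋ - 1)! as n → ∞, i.e., the ratio of the two sides tends to 1. -/
open Filter Asymptotics Finset

lemma fact_le_pow_mul' (i m : ℕ) : (i + m).factorial ≤ i.factorial * (i + m) ^ m := by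
  induction m with
  | zero => simp
  | succ m ih =>
    have h1 : (i + (m+1)).factorial = (i + m + 1) * (i + m).factorial := rfl
    rw [h1]
    calc (i+m+1) * (i+m).factorial ≤ (i+m+1) * (i.factorial * (i+m)^m) :=
        Nat.mul_le_mul_left _ ih
      _ = i.factorial * ((i+m+1) * (i+m)^m) := by ring
      _ ≤ i.factorial * ((i+m+1) * (i+m+1)^m) :=
        Nat.mul_le_mul_left _ (Nat.mul_le_mul_left _ (Nat.pow_le_pow_left (by omega) m))
      _ = i.factorial * (i + (m+1))^(m+1) := by ring_nf

lemma term_ineq (L : ℝ) (hL : 0 < L) (i m : ℕ) :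
    L ^ i / (i.factorial : ℝ) ≤
      L ^ (i+m) / ((i+m).factorial : ℝ) * (((i+m : ℕ) : ℝ) / L) ^ m := by
  have hf1 : (0:ℝ) < (i.factorial : ℝ) := by exact_mod_cast i.factorial_pos
  have hf2 : (0:ℝ) < ((i+m).factorial : ℝ) := by exact_mod_cast (i+m).factorial_pos
  have key : ((i+m).factorial : ℝ) ≤ (i.factorial : ℝ) * ((i+m : ℕ) : ℝ) ^ m := by
    exact_mod_cast fact_le_pow_mul' i m
  have heq : L ^ (i+m) / ((i+m).factorial : ℝ) * (((i+m : ℕ) : ℝ) / L) ^ m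
      = L ^ i * (((i+m : ℕ) : ℝ) ^ m / ((i+m).factorial : ℝ)) := by
    rw [div_pow, pow_add]
    field_simp
  rw [heq]
  rw [div_eq_mul_one_div (L^i)]
  apply mul_le_mul_of_nonneg_left _ (pow_nonneg hL.le i)
  rw [div_le_div_iff₀ hf1 hf2]
  nlinarith

theorem stmt_8 (j : ℕ → ℝ) (hjpos : ∀ n, 0 < j n)
    (hjtop : Tendsto j atTop atTop)
    (hjo : j =o[atTop] fun n : ℕ => Real.log n)
    (u : ℝ) (hu : 0 < u) :
    Tendsto (fun n : ℕ =>
      (∑ i ∈ Finset.range ⌊j n * u⌋₊, (Real.log n) ^ i / (i.factorial : ℝ)) /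
        ((Real.log n) ^ (⌊j n * u⌋₊ - 1) / ((⌊j n * u⌋₊ - 1).factorial : ℝ)))
      atTop (nhds 1) := by
  set L : ℕ → ℝ := fun n => Real.log n with hLdef
  set k : ℕ → ℕ := fun n => ⌊j n * u⌋₊ with hkdef
  set r : ℕ → ℝ := fun n => ((k n - 1 : ℕ) : ℝ) / L n with hrdef
  have hL1 : ∀ᶠ n : ℕ in atTop, 1 ≤ L n := by
    have : Tendsto L atTop atTop :=
      Real.tendsto_log_atTop.comp tendsto_natCast_atTop_atTop
    exact this.eventually_ge_atTop 1
  have hk1 : ∀ᶠ n : ℕ in atTop, 1 ≤ k n := by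
    filter_upwards [hjtop.eventually_ge_atTop (1/u)] with n hn
    rw [div_le_iff₀ hu] at hn
    exact Nat.le_floor (by push_cast; linarith)
  have hjdiv : Tendsto (fun n => j n / L n * u) atTop (nhds 0) := by
    simpa using (hjo.tendsto_div_nhds_zero.mul_const u)
  have hr0 : Tendsto r atTop (nhds 0) := by
    apply squeeze_zero' _ _ hjdiv
    · filter_upwards [hL1] with n hLn
      have hLpos : 0 < L n := lt_of_lt_of_le one_pos hLn
      positivity
    · filter_upwards [hL1, hjtop.eventually_ge_atTop 0] with n hLn hjn
      have hLpos : 0 < L n := lt_of_lt_of_le one_pos hLn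
      have h1 : ((k n - 1 : ℕ) : ℝ) ≤ j n * u := by
        calc ((k n - 1 : ℕ) : ℝ) ≤ (k n : ℝ) := by exact_mod_cast Nat.sub_le _ _
          _ ≤ j n * u := Nat.floor_le (by positivity)
      rw [div_mul_eq_mul_div]
      show ((k n - 1 : ℕ) : ℝ) / L n ≤ j n * u / L n
      gcongr
  -- limit of upper bound function
  have hub : Tendsto (fun n => 1 / (1 - r n)) atTop (nhds 1) := by
    have h1 : Tendsto (fun n => 1 - r n) atTop (nhds 1) := by
      simpa using (tendsto_const_nhds.sub hr0)
    have h2 := h1.inv₀ one_ne_zero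
    simpa [one_div] using h2
  have hrhalf : ∀ᶠ n : ℕ in atTop, r n < 1/2 :=
    hr0.eventually_lt_const (by norm_num)
  -- main squeeze
  apply tendsto_of_tendsto_of_tendsto_of_le_of_le' tendsto_const_nhds hub
  · -- 1 ≤ ratio eventually
    filter_upwards [hL1, hk1] with n hLn hkn
    have hLpos : 0 < L n := lt_of_lt_of_le one_pos hLn
    have hD : 0 < L n ^ (k n - 1) / ((k n - 1).factorial : ℝ) := by positivity
    rw [le_div_iff₀ hD, one_mul]
    have hmem : k n - 1 ∈ Finset.range (k n) := by
      simp [Finset.mem_range]; omega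
    exact Finset.single_le_sum (f := fun i => L n ^ i / (i.factorial : ℝ))
      (fun i _ => by positivity) hmem
  · -- ratio ≤ 1/(1-r) eventually
    filter_upwards [hL1, hk1, hrhalf] with n hLn hkn hrn
    have hLpos : 0 < L n := lt_of_lt_of_le one_pos hLn
    have hD : 0 < L n ^ (k n - 1) / ((k n - 1).factorial : ℝ) := by positivity
    have hr_nonneg : 0 ≤ r n := by positivity
    rw [div_le_iff₀ hD]
    have step1 : ∑ i ∈ Finset.range (k n), L n ^ i / (i.factorial : ℝ)
        ≤ (L n ^ (k n - 1) / ((k n - 1).factorial : ℝ)) * ∑ m ∈ Finset.range (k n), r n ^ m := by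
      rw [Finset.mul_sum]
      rw [← Finset.sum_range_reflect (fun m => (L n ^ (k n - 1) / ((k n - 1).factorial : ℝ)) * r n ^ m) (k n)]
      apply Finset.sum_le_sum
      intro i hi
      rw [Finset.mem_range] at hi
      have hik : i ≤ k n - 1 := by omega
      have h1 : k n - 1 - (k n - 1 - i) = i := by omega
      have h2 : k n - 1 = i + (k n - 1 - i) := by omega
      have T := term_ineq (L n) hLpos i (k n - 1 - i)
      rw [← h2] at T
      exact T
    have step2 : ∑ m ∈ Finset.range (k n), r n ^ m ≤ 1 / (1 - r n) := by
      have h := geom_sum_Ico_le_of_lt_one hr_nonneg (by linarith : r n < 1) (m := 0) (n := k n)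
      rw [← Finset.range_eq_Ico, pow_zero] at h
      exact h
    calc ∑ i ∈ Finset.range (k n), L n ^ i / (i.factorial : ℝ)
        ≤ (L n ^ (k n - 1) / ((k n - 1).factorial : ℝ)) * ∑ m ∈ Finset.range (k n), r n ^ m := step1
      _ ≤ (L n ^ (k n - 1) / ((k n - 1).factorial : ℝ)) * (1 / (1 - r n)) :=
          mul_le_mul_of_nonneg_left step2 hD.le
      _ = 1 / (1 - r n) * (L n ^ (k n - 1) / ((k n - 1).factorial : ℝ)) := by ring
end

section
/- Define D_j : [0,∞) → ℝ recursively by D_0(t) = 0 and D_j(t) ≤ ∫_0^t D_{j-1}(y) dy + t^{2j-2}/((j-1)!)² + 5t^{2j-1}/(((j-1)!)²(2j-1)) for j ≥ 1. Then for all j ≥ 1 and t ≥ 0, D_j(t) ≤ Σ_{i=0}^{j-1} (t^{j-1+i}/(i!)²)·((2i)!/(j-1+i)!) + 5·Σ_{i=0}^{j-1} (t^{j+i}/(i!)²)·((2i)!/(j+i)!). -/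
open Finset intervalIntegral

private lemma pow_int (n : ℕ) (a b t : ℝ) :
    (∫ y in (0:ℝ)..t, y ^ n / a * b) = t ^ (n+1) / ((n:ℝ)+1) / a * b := by
  rw [intervalIntegral.integral_mul_const, intervalIntegral.integral_div, integral_pow]
  norm_num

private lemma term_eq (m i : ℕ) (t : ℝ) :
    t ^ (m+1) / ((m:ℝ)+1) / ((i.factorial : ℝ)) ^ 2 * (((2*i).factorial : ℝ) / (m.factorial : ℝ))
    = t ^ (m+1) / ((i.factorial : ℝ)) ^ 2 * (((2*i).factorial : ℝ) / ((m+1).factorial : ℝ)) := by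
  have h1 : ((m+1).factorial : ℝ) = ((m:ℝ)+1) * (m.factorial : ℝ) := by
    rw [Nat.factorial_succ]; push_cast; ring
  have h2 : (m.factorial : ℝ) ≠ 0 := Nat.cast_ne_zero.mpr m.factorial_ne_zero
  have h3 : ((m:ℝ)+1) ≠ 0 := by positivity
  have h4 : ((i.factorial : ℝ)) ≠ 0 := Nat.cast_ne_zero.mpr i.factorial_ne_zero
  rw [h1]; field_simp

theorem stmt_15 (D : ℕ → ℝ → ℝ)
    (hDcont : ∀ j, Continuous (D j))
    (hDnn : ∀ j (t : ℝ), 0 ≤ t → 0 ≤ D j t)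
    (hD0 : ∀ t : ℝ, D 0 t = 0)
    (hDrec : ∀ j : ℕ, 1 ≤ j → ∀ t : ℝ, 0 ≤ t →
      D j t ≤ (∫ y in (0:ℝ)..t, D (j - 1) y)
        + t ^ (2 * j - 2) / ((j - 1).factorial : ℝ) ^ 2
        + 5 * t ^ (2 * j - 1) / (((j - 1).factorial : ℝ) ^ 2 * (2 * (j : ℝ) - 1))) :
    ∀ j : ℕ, 1 ≤ j → ∀ t : ℝ, 0 ≤ t →
      D j t ≤
        (∑ i ∈ Finset.range j,
          t ^ (j - 1 + i) / ((i.factorial : ℝ)) ^ 2 * (((2 * i).factorial : ℝ) / ((j - 1 + i).factorial : ℝ)))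
        + 5 * ∑ i ∈ Finset.range j,
          t ^ (j + i) / ((i.factorial : ℝ)) ^ 2 * (((2 * i).factorial : ℝ) / ((j + i).factorial : ℝ)) := by
  have key : ∀ k : ℕ, ∀ t : ℝ, 0 ≤ t →
      D (k+1) t ≤ (∑ i ∈ Finset.range (k+1),
          t ^ (k + i) / ((i.factorial : ℝ)) ^ 2 * (((2 * i).factorial : ℝ) / ((k + i).factorial : ℝ)))
        + 5 * ∑ i ∈ Finset.range (k+1),
          t ^ (k + 1 + i) / ((i.factorial : ℝ)) ^ 2 * (((2 * i).factorial : ℝ) / ((k + 1 + i).factorial : ℝ)) := by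
    intro k
    induction k with
    | zero =>
      intro t ht
      have h := hDrec 1 le_rfl t ht
      simp [hD0] at h
      simp [Finset.sum_range_one]
      norm_num at h ⊢
      linarith
    | succ k ih =>
      intro t ht
      have h := hDrec (k+2) (by omega) t ht
      have e1 : 2 * (k+2) - 2 = 2*k + 2 := by omega
      have e2 : 2 * (k+2) - 1 = 2*k + 3 := by omega
      have e3 : (k + 2 : ℕ) - 1 = k + 1 := rfl
      rw [e1, e2, e3] at h
      have j1 : IntervalIntegrable (fun y : ℝ => ∑ i ∈ Finset.range (k+1),
          y ^ (k + i) / ((i.factorial : ℝ)) ^ 2 * (((2 * i).factorial : ℝ) / ((k + i).factorial : ℝ)))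
          MeasureTheory.volume 0 t := by
        apply Continuous.intervalIntegrable; fun_prop
      have j2 : IntervalIntegrable (fun y : ℝ => 5 * ∑ i ∈ Finset.range (k+1),
          y ^ (k + 1 + i) / ((i.factorial : ℝ)) ^ 2 * (((2 * i).factorial : ℝ) / ((k + 1 + i).factorial : ℝ)))
          MeasureTheory.volume 0 t := by
        apply Continuous.intervalIntegrable; fun_prop
      have hmono : (∫ y in (0:ℝ)..t, D (k+1) y) ≤
          ∫ y in (0:ℝ)..t, ((∑ i ∈ Finset.range (k+1),
            y ^ (k + i) / ((i.factorial : ℝ)) ^ 2 * (((2 * i).factorial : ℝ) / ((k + i).factorial : ℝ)))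
          + 5 * ∑ i ∈ Finset.range (k+1),
            y ^ (k + 1 + i) / ((i.factorial : ℝ)) ^ 2 * (((2 * i).factorial : ℝ) / ((k + 1 + i).factorial : ℝ))) := by
        apply intervalIntegral.integral_mono_on ht
          ((hDcont (k+1)).intervalIntegrable _ _)
        · apply Continuous.intervalIntegrable; fun_prop
        · intro y hy; exact ih y hy.1
      have i1 : ∀ i : ℕ, IntervalIntegrable (fun y : ℝ => y ^ (k + i) / ((i.factorial : ℝ)) ^ 2 * (((2 * i).factorial : ℝ) / ((k + i).factorial : ℝ))) MeasureTheory.volume 0 t := by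
        intro i; apply Continuous.intervalIntegrable; fun_prop
      have i2 : ∀ i : ℕ, IntervalIntegrable (fun y : ℝ => y ^ (k + 1 + i) / ((i.factorial : ℝ)) ^ 2 * (((2 * i).factorial : ℝ) / ((k + 1 + i).factorial : ℝ))) MeasureTheory.volume 0 t := by
        intro i; apply Continuous.intervalIntegrable; fun_prop
      have hcalc : (∫ y in (0:ℝ)..t, ((∑ i ∈ Finset.range (k+1),
            y ^ (k + i) / ((i.factorial : ℝ)) ^ 2 * (((2 * i).factorial : ℝ) / ((k + i).factorial : ℝ)))
          + 5 * ∑ i ∈ Finset.range (k+1),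
            y ^ (k + 1 + i) / ((i.factorial : ℝ)) ^ 2 * (((2 * i).factorial : ℝ) / ((k + 1 + i).factorial : ℝ))))
          = (∑ i ∈ Finset.range (k+1),
              t ^ (k + 1 + i) / ((i.factorial : ℝ)) ^ 2 * (((2 * i).factorial : ℝ) / ((k + 1 + i).factorial : ℝ)))
            + 5 * ∑ i ∈ Finset.range (k+1),
              t ^ (k + 1 + 1 + i) / ((i.factorial : ℝ)) ^ 2 * (((2 * i).factorial : ℝ) / ((k + 1 + 1 + i).factorial : ℝ)) := by
        rw [intervalIntegral.integral_add j1 j2, intervalIntegral.integral_const_mul,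
          intervalIntegral.integral_finset_sum (fun i _ => i1 i),
          intervalIntegral.integral_finset_sum (fun i _ => i2 i)]
        congr 1
        · apply Finset.sum_congr rfl
          intro i _
          have e : k + 1 + i = k + i + 1 := by omega
          rw [e, pow_int (k+i)]
          exact term_eq (k+i) i t
        · congr 1
          apply Finset.sum_congr rfl
          intro i _
          have e : k + 1 + 1 + i = k + 1 + i + 1 := by omega
          rw [e, pow_int (k+1+i)]
          exact term_eq (k+1+i) i t
      rw [hcalc] at hmono
      rw [Finset.sum_range_succ (f := fun i => t ^ (k + 1 + i) / ((i.factorial : ℝ)) ^ 2 * (((2 * i).factorial : ℝ) / ((k + 1 + i).factorial : ℝ))) (n := k+1),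
        Finset.sum_range_succ (f := fun i => t ^ (k + 1 + 1 + i) / ((i.factorial : ℝ)) ^ 2 * (((2 * i).factorial : ℝ) / ((k + 1 + 1 + i).factorial : ℝ))) (n := k+1)]
      have extra1 : t ^ (k + 1 + (k+1)) / (((k+1).factorial : ℝ)) ^ 2 * (((2 * (k+1)).factorial : ℝ) / ((k + 1 + (k+1)).factorial : ℝ))
          = t ^ (2*k+2) / (((k+1).factorial : ℝ)) ^ 2 := by
        have e : k + 1 + (k+1) = 2*(k+1) := by omega
        rw [e, div_self (Nat.cast_ne_zero.mpr (2*(k+1)).factorial_ne_zero), mul_one]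
        norm_num [show 2*(k+1) = 2*k+2 from by omega]
      have extra2 : t ^ (k + 1 + 1 + (k+1)) / (((k+1).factorial : ℝ)) ^ 2 * (((2 * (k+1)).factorial : ℝ) / ((k + 1 + 1 + (k+1)).factorial : ℝ))
          = (5 * t ^ (2*k+3) / ((((k+1).factorial : ℝ)) ^ 2 * (2 * ((k+2 : ℕ) : ℝ) - 1))) / 5 := by
        have e : k + 1 + 1 + (k+1) = 2*k+3 := by omega
        have e2 : 2*(k+1) = 2*k+2 := by omega
        rw [e, e2]
        have hfac : ((2*k+3).factorial : ℝ) = ((2*k+3 : ℕ) : ℝ) * ((2*k+2).factorial : ℝ) := by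
          rw [show 2*k+3 = (2*k+2)+1 from rfl, Nat.factorial_succ]; push_cast; ring
        rw [hfac]
        have h2 : ((2*k+2).factorial : ℝ) ≠ 0 := Nat.cast_ne_zero.mpr (2*k+2).factorial_ne_zero
        have h4 : (((k+1).factorial : ℝ)) ≠ 0 := Nat.cast_ne_zero.mpr (k+1).factorial_ne_zero
        have h5 : (2 * ((k+2 : ℕ) : ℝ) - 1) = ((2*k+3 : ℕ) : ℝ) := by push_cast; ring
        rw [h5]
        have h6 : ((2*k+3 : ℕ) : ℝ) ≠ 0 := by positivity
        field_simp
      rw [extra1, extra2]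
      linarith
  intro j hj t ht
  rcases j with _ | k
  · omega
  · simpa using key k t ht
end

section
/- For i, j positive integers with i ≤ j-3, define A(i,j) = (j!)²(2i)!/((i!)²(j+i)!·j²). Then A(i,j) ≤ √2·e·4^i·√j·(j/e)^{j-i-2}. -/
open Real Nat

theorem stmt_16 (i j : ℕ) (hi : 1 ≤ i) (hij : i ≤ j - 3) (hj : 3 ≤ j) :
    ((j.factorial : ℝ) ^ 2 * ((2 * i).factorial : ℝ)
        / (((i.factorial : ℝ)) ^ 2 * (((j + i).factorial : ℝ)) * (j : ℝ) ^ 2)) ≤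
      Real.sqrt 2 * Real.exp 1 * 4 ^ i * Real.sqrt j * ((j : ℝ) / Real.exp 1) ^ (j - i - 2) := by
  have hi3j : i + 3 ≤ j := by omega
  have hjpos : (0:ℝ) < j := by
    have : 0 < j := by omega
    exact_mod_cast this
  set P : ℝ := (j : ℝ) / Real.exp 1 with hP
  have hPpos : 0 < P := by positivity
  have hepos : (0:ℝ) < Real.exp 1 := Real.exp_pos 1
  have hje : (j:ℝ) = P * Real.exp 1 := by
    rw [hP]; field_simp
  -- Step 1: (2i)! ≤ 4^i (i!)^2
  have step1 : ((2*i).factorial : ℝ) ≤ 4 ^ i * (i.factorial : ℝ) ^ 2 := by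
    have h1 : (2*i).choose i * i.factorial * (2*i - i).factorial = (2*i).factorial :=
      Nat.choose_mul_factorial_mul_factorial (by omega)
    have h2 : 2*i - i = i := by omega
    rw [h2] at h1
    have hc : (2*i).choose i ≤ 4 ^ i :=
      (Nat.choose_le_succ (2*i) i).trans (Nat.choose_middle_le_pow i)
    have : (2*i).factorial ≤ 4 ^ i * (i.factorial * i.factorial) := by
      calc (2*i).factorial = (2*i).choose i * i.factorial * i.factorial := h1.symm
        _ ≤ 4 ^ i * i.factorial * i.factorial :=
            Nat.mul_le_mul_right _ (Nat.mul_le_mul_right _ hc)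
        _ = 4 ^ i * (i.factorial * i.factorial) := by ring
    calc ((2*i).factorial : ℝ) ≤ ((4 ^ i * (i.factorial * i.factorial) : ℕ) : ℝ) := by
          exact_mod_cast this
      _ = 4 ^ i * (i.factorial : ℝ) ^ 2 := by push_cast; ring
  -- Step 2: j! * j^i ≤ (j+i)!
  have step2 : (j.factorial : ℝ) * (j:ℝ) ^ i ≤ ((j+i).factorial : ℝ) := by
    have h1 : j.factorial * j ^ i ≤ j.factorial * (j+1) ^ i :=
      Nat.mul_le_mul_left _ (Nat.pow_le_pow_left (by omega) i)
    have h2 : j.factorial * (j+1) ^ i ≤ (j+i).factorial :=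
      Nat.factorial_mul_pow_le_factorial
    have := h1.trans h2
    exact_mod_cast this
  -- Step 3: j! ≤ e √j (j/e)^j via Stirling
  have step3 : (j.factorial : ℝ) ≤ Real.exp 1 * Real.sqrt j * P ^ j := by
    have hanti := Stirling.stirlingSeq'_antitone (Nat.zero_le (j-1))
    simp only [Function.comp_apply, Nat.succ_eq_add_one, Nat.zero_add] at hanti
    have hjs : j - 1 + 1 = j := by omega
    rw [hjs, Stirling.stirlingSeq_one] at hanti
    have hden : (0:ℝ) < Real.sqrt (2 * j) * P ^ j := by positivity
    have : (j.factorial : ℝ) / (Real.sqrt (2 * j) * P ^ j) ≤ Real.exp 1 / Real.sqrt 2 := by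
      simpa [Stirling.stirlingSeq, hP] using hanti
    have h2 : (j.factorial : ℝ) ≤ (Real.exp 1 / Real.sqrt 2) * (Real.sqrt (2 * j) * P ^ j) :=
      (div_le_iff₀ hden).mp this
    have hsq : Real.sqrt (2 * (j:ℝ)) = Real.sqrt 2 * Real.sqrt j := Real.sqrt_mul (by norm_num) _
    have hs2 : (0:ℝ) < Real.sqrt 2 := by positivity
    calc (j.factorial : ℝ) ≤ (Real.exp 1 / Real.sqrt 2) * (Real.sqrt (2 * j) * P ^ j) := h2
      _ = Real.exp 1 * Real.sqrt j * P ^ j := by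
          rw [hsq]; field_simp
  -- key exponent identity
  have hsplit : j - i - 2 + (i + 2) = j := by omega
  have hPJ : P ^ (j - i - 2) * (j:ℝ) ^ (i+2) = P ^ j * Real.exp 1 ^ (i+2) := by
    calc P ^ (j - i - 2) * (j:ℝ) ^ (i+2)
        = P ^ (j - i - 2) * (P * Real.exp 1) ^ (i+2) := by rw [← hje]
      _ = P ^ (j - i - 2 + (i+2)) * Real.exp 1 ^ (i+2) := by
          rw [mul_pow, pow_add]; ring
      _ = P ^ j * Real.exp 1 ^ (i+2) := by rw [hsplit]
  have hone : (1:ℝ) ≤ Real.sqrt 2 * Real.exp 1 ^ (i+2) := by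
    have h1 : (1:ℝ) ≤ Real.sqrt 2 := by
      rw [show (1:ℝ) = Real.sqrt 1 by simp]
      exact Real.sqrt_le_sqrt (by norm_num)
    have h2 : (1:ℝ) ≤ Real.exp 1 ^ (i+2) :=
      one_le_pow₀ (Real.one_le_exp (by norm_num))
    nlinarith
  set R : ℝ := Real.sqrt 2 * Real.exp 1 * 4 ^ i * Real.sqrt j * P ^ (j - i - 2) with hR
  have hRpos : 0 < R := by positivity
  -- main reduction
  have hfac_pos : (0:ℝ) < (j.factorial : ℝ) := by exact_mod_cast j.factorial_pos
  have hifac_pos : (0:ℝ) < (i.factorial : ℝ) := by exact_mod_cast i.factorial_pos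
  have hRkey : (j.factorial : ℝ) * 4 ^ i ≤ R * (j:ℝ) ^ (i+2) := by
    have hRj : R * (j:ℝ) ^ (i+2)
        = (Real.sqrt 2 * Real.exp 1 ^ (i+2)) * (Real.exp 1 * Real.sqrt j * P ^ j * 4 ^ i) := by
      rw [hR]
      linear_combination (Real.sqrt 2 * Real.exp 1 * 4 ^ i * Real.sqrt j) * hPJ
    calc (j.factorial : ℝ) * 4 ^ i ≤ (Real.exp 1 * Real.sqrt j * P ^ j) * 4 ^ i :=
          mul_le_mul_of_nonneg_right step3 (by positivity)
      _ ≤ (Real.sqrt 2 * Real.exp 1 ^ (i+2)) * (Real.exp 1 * Real.sqrt j * P ^ j * 4 ^ i) :=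
          le_mul_of_one_le_left (by positivity) hone
      _ = R * (j:ℝ) ^ (i+2) := hRj.symm
  rw [div_le_iff₀ (by positivity)]
  calc (j.factorial : ℝ) ^ 2 * ((2*i).factorial : ℝ)
      ≤ (j.factorial : ℝ) ^ 2 * (4 ^ i * (i.factorial : ℝ) ^ 2) :=
        mul_le_mul_of_nonneg_left step1 (by positivity)
    _ = ((j.factorial : ℝ) * 4 ^ i) * ((j.factorial : ℝ) * (i.factorial : ℝ) ^ 2) := by ring
    _ ≤ (R * (j:ℝ) ^ (i+2)) * ((j.factorial : ℝ) * (i.factorial : ℝ) ^ 2) :=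
        mul_le_mul_of_nonneg_right hRkey (by positivity)
    _ = R * ((i.factorial : ℝ) ^ 2 * ((j.factorial : ℝ) * (j:ℝ) ^ i) * (j:ℝ) ^ 2) := by ring
    _ ≤ R * ((i.factorial : ℝ) ^ 2 * ((j+i).factorial : ℝ) * (j:ℝ) ^ 2) := by
        gcongr
end

section
/- Let j = j(t) be positive-integer-valued with j(t) → ∞ and j(t) = o(t) as t → ∞, and let A(i,j) = (j!)²(2i)!/((i!)²(j+i)!·j²). Then lim_{t→∞} Σ_{i=0}^{j(t)-3} A(i,j(t))/t^{j(t)-i-2} = 0. -/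
open Filter Asymptotics Finset

theorem stmt_17 (j : ℝ → ℕ)
    (hjtop : Tendsto (fun t : ℝ => (j t : ℝ)) atTop atTop)
    (hjo : (fun t : ℝ => (j t : ℝ)) =o[atTop] fun t : ℝ => t)
    (A : ℕ → ℕ → ℝ)
    (hA : ∀ i k : ℕ, A i k =
      ((k.factorial : ℝ) ^ 2 * ((2 * i).factorial : ℝ))
        / (((i.factorial : ℝ)) ^ 2 * (((k + i).factorial : ℝ)) * (k : ℝ) ^ 2)) :
    Tendsto (fun t : ℝ =>
        ∑ i ∈ Finset.range (j t - 2), A i (j t) / t ^ (j t - i - 2))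
      atTop (nhds 0) := by
  -- A is nonnegative
  have hAnn : ∀ i k, 0 ≤ A i k := by
    intro i k; rw [hA]; positivity
  -- step inequality : A i k ≤ k * A (i+1) k
  have hstep : ∀ i k : ℕ, i + 1 ≤ k → A i k ≤ (k:ℝ) * A (i+1) k := by
    intro i k hik
    have hk : 0 < k := by omega
    rw [hA, hA]
    have hf1 : (((i+1).factorial : ℕ) : ℝ) = ((i:ℝ)+1) * i.factorial := by
      rw [Nat.factorial_succ]; push_cast; ring
    have hf2 : (((k+(i+1)).factorial : ℕ) : ℝ) = ((k:ℝ)+i+1) * (k+i).factorial := by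
      rw [show k+(i+1) = (k+i)+1 by ring, Nat.factorial_succ]; push_cast; ring
    have hf3 : (((2*(i+1)).factorial : ℕ) : ℝ) = (2*(i:ℝ)+2) * ((2*(i:ℝ)+1) * (2*i).factorial) := by
      rw [show 2*(i+1) = (2*i)+1+1 by ring, Nat.factorial_succ, Nat.factorial_succ]; push_cast; ring
    rw [hf1, hf2, hf3, ← mul_div_assoc]
    have p1 : (0:ℝ) < (i.factorial:ℝ)^2 * ((k+i).factorial:ℝ) * (k:ℝ)^2 := by
      have := i.factorial_pos; have := (k+i).factorial_pos; positivity
    have p2 : (0:ℝ) < (((i:ℝ)+1) * (i.factorial:ℝ))^2 * (((k:ℝ)+i+1) * ((k+i).factorial:ℝ)) * (k:ℝ)^2 := by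
      have := i.factorial_pos; have := (k+i).factorial_pos; positivity
    rw [div_le_div_iff₀ p1 p2]
    have hik' : (i:ℝ)+1 ≤ (k:ℝ) := by exact_mod_cast hik
    have hi0 : (0:ℝ) ≤ (i:ℝ) := Nat.cast_nonneg i
    have key : ((i:ℝ)+1) * ((k:ℝ)+(i:ℝ)+1) ≤ 2*(k:ℝ)*(2*(i:ℝ)+1) := by nlinarith
    have hC : (0:ℝ) ≤ (k.factorial:ℝ)^2*((2*i).factorial:ℝ)*(i.factorial:ℝ)^2*((k+i).factorial:ℝ)*(k:ℝ)^2*((i:ℝ)+1) := by positivity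
    nlinarith [mul_le_mul_of_nonneg_left key hC]
  -- last term bound
  have hlast : ∀ m : ℕ, A (m+2) (m+5) ≤ ((m:ℝ)+5) := by
    intro m
    rw [hA]
    have hf1 : (((m+5).factorial : ℕ) : ℝ) = ((m:ℝ)+5) * (((m:ℝ)+4) * (((m:ℝ)+3) * (m+2).factorial)) := by
      rw [show m+5 = (m+2)+1+1+1 by ring, Nat.factorial_succ, Nat.factorial_succ, Nat.factorial_succ]
      push_cast; ring
    have hf2 : ((((m+5)+(m+2)).factorial : ℕ) : ℝ) = (2*(m:ℝ)+7) * ((2*(m:ℝ)+6) * ((2*(m:ℝ)+5) * (2*(m+2)).factorial)) := by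
      rw [show (m+5)+(m+2) = (2*(m+2))+1+1+1 by ring, Nat.factorial_succ, Nat.factorial_succ, Nat.factorial_succ]
      push_cast; ring
    rw [hf1, hf2]
    have p1 : (0:ℝ) < ((m+2).factorial:ℝ) := by exact_mod_cast (m+2).factorial_pos
    have p2 : (0:ℝ) < ((2*(m+2)).factorial:ℝ) := by exact_mod_cast (2*(m+2)).factorial_pos
    rw [div_le_iff₀ (by positivity)]
    have hm0 : (0:ℝ) ≤ (m:ℝ) := Nat.cast_nonneg m
    have key : (((m:ℝ)+4)*((m:ℝ)+3))^2 ≤ ((m:ℝ)+5)*((2*(m:ℝ)+7)*((2*(m:ℝ)+6)*(2*(m:ℝ)+5))) := by nlinarith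
    have hC : (0:ℝ) ≤ ((m+2).factorial:ℝ)^2 * ((2*(m+2)).factorial:ℝ) * ((m:ℝ)+5)^2 := by positivity
    push_cast
    nlinarith [mul_le_mul_of_nonneg_left key hC]
  -- geometric domination of terms by the last one
  have hterm : ∀ (t : ℝ), 1 ≤ t → ∀ (m d : ℕ), d ≤ m+2 →
      A (m+2-d) (m+5) / t^(d+1) ≤ (((m:ℝ)+5)/t)^d * (A (m+2) (m+5) / t) := by
    intro t ht m d
    have ht0 : (0:ℝ) < t := lt_of_lt_of_le one_pos ht
    induction d with
    | zero => intro _; simp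
    | succ d ih =>
      intro hd
      have ih' := ih (by omega)
      have hidx : m+2-(d+1)+1 = m+2-d := by omega
      have h1 : A (m+2-(d+1)) (m+5) ≤ ((m:ℝ)+5) * A (m+2-d) (m+5) := by
        have h := hstep (m+2-(d+1)) (m+5) (by omega)
        rw [hidx] at h
        convert h using 2 <;> push_cast <;> ring
      calc A (m+2-(d+1)) (m+5) / t^(d+1+1)
          ≤ (((m:ℝ)+5) * A (m+2-d) (m+5)) / t^(d+1+1) := by
            apply div_le_div_of_nonneg_right h1 (by positivity) |>.trans_eq rfl
        _ = (((m:ℝ)+5)/t) * (A (m+2-d) (m+5) / t^(d+1)) := by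
            rw [pow_succ]; ring
        _ ≤ (((m:ℝ)+5)/t) * ((((m:ℝ)+5)/t)^d * (A (m+2) (m+5) / t)) := by
            apply mul_le_mul_of_nonneg_left ih' (by positivity)
        _ = (((m:ℝ)+5)/t)^(d+1) * (A (m+2) (m+5) / t) := by rw [pow_succ]; ring
  -- eventual facts
  have hdiv : Tendsto (fun t => (j t : ℝ)/t) atTop (nhds 0) := hjo.tendsto_div_nhds_zero
  have h5 : ∀ᶠ t in atTop, 5 ≤ j t := by
    filter_upwards [hjtop.eventually_ge_atTop (5:ℝ)] with t ht
    exact_mod_cast ht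
  have hhalf : ∀ᶠ t in atTop, (j t : ℝ)/t ≤ 1/2 := by
    filter_upwards [hdiv.eventually (eventually_le_nhds (by norm_num : (0:ℝ) < 1/2))] with t ht
    exact ht
  have ht1 : ∀ᶠ t in atTop, (1:ℝ) ≤ t := eventually_ge_atTop 1
  -- upper bound eventually
  have hub : ∀ᶠ t in atTop,
      ∑ i ∈ Finset.range (j t - 2), A i (j t) / t ^ (j t - i - 2) ≤ 2 * ((j t : ℝ)/t) := by
    filter_upwards [h5, hhalf, ht1] with t hk5 hh h1t
    have ht0 : (0:ℝ) < t := lt_of_lt_of_le one_pos h1t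
    obtain ⟨m, hm⟩ : ∃ m, j t = m + 5 := ⟨j t - 5, by omega⟩
    have hcast : ((j t : ℕ) : ℝ) = (m:ℝ)+5 := by rw [hm]; push_cast; ring
    have hr0 : (0:ℝ) ≤ ((m:ℝ)+5)/t := by positivity
    have hr2 : ((m:ℝ)+5)/t ≤ 1/2 := by rw [← hcast]; exact hh
    have hTnn : 0 ≤ A (m+2) (m+5) / t := div_nonneg (hAnn _ _) ht0.le
    calc ∑ i ∈ Finset.range (j t - 2), A i (j t) / t ^ (j t - i - 2)
        = ∑ i ∈ Finset.range (m+3), A i (m+5) / t ^ (m+3-i) := by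
          rw [hm]
          apply Finset.sum_congr (by congr 1)
          intro i hi
          simp only [Finset.mem_range] at hi
          congr 2
          omega
      _ ≤ ∑ i ∈ Finset.range (m+3), (((m:ℝ)+5)/t)^(m+2-i) * (A (m+2) (m+5) / t) := by
          apply Finset.sum_le_sum
          intro i hi
          simp only [Finset.mem_range] at hi
          have h := hterm t h1t m (m+2-i) (by omega)
          rw [show m+2-(m+2-i) = i by omega, show m+2-i+1 = m+3-i by omega] at h
          exact h
      _ = (∑ i ∈ Finset.range (m+3), (((m:ℝ)+5)/t)^(m+2-i)) * (A (m+2) (m+5) / t) := by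
          rw [Finset.sum_mul]
      _ = (∑ d ∈ Finset.range (m+3), (((m:ℝ)+5)/t)^d) * (A (m+2) (m+5) / t) := by
          congr 1
          rw [← Finset.sum_range_reflect]
          apply Finset.sum_congr rfl
          intro i hi
          simp only [Finset.mem_range] at hi
          congr 1
          omega
      _ ≤ 2 * (A (m+2) (m+5) / t) := by
          apply mul_le_mul_of_nonneg_right _ hTnn
          calc ∑ d ∈ Finset.range (m+3), (((m:ℝ)+5)/t)^d
              ≤ ∑ d ∈ Finset.range (m+3), (1/2:ℝ)^d := by
                apply Finset.sum_le_sum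
                intro d _
                exact pow_le_pow_left₀ hr0 hr2 d
            _ ≤ 2 := sum_geometric_two_le _
      _ ≤ 2 * (((m:ℝ)+5) / t) := by
          gcongr
          exact hlast m
      _ = 2 * ((j t : ℝ)/t) := by rw [hcast]
  -- lower bound eventually
  have hlb : ∀ᶠ t in atTop,
      0 ≤ ∑ i ∈ Finset.range (j t - 2), A i (j t) / t ^ (j t - i - 2) := by
    filter_upwards [ht1] with t h1t
    have ht0 : (0:ℝ) < t := lt_of_lt_of_le one_pos h1t
    apply Finset.sum_nonneg
    intro i _
    have := hAnn i (j t)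
    positivity
  have hz : Tendsto (fun t => 2 * ((j t : ℝ)/t)) atTop (nhds 0) := by
    have := hdiv.const_mul (2:ℝ)
    simpa using this
  exact tendsto_of_tendsto_of_tendsto_of_le_of_le' tendsto_const_nhds hz hlb hub
end
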